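/- Suppose ΔᵀXᵀXΔ ≥ n·ρ·‖Δ‖₂² for every Δ ∈ ℝ^p, where ρ > 0 (i.e. the smallest eigenvalue of XᵀX/n is at least ρ). Then for every Δ ∈ ℝ^p, every norm-minimizing G-decomposition (v_g)_{g∈G} of Δ, and every subset J ⊆ G, one has √(ΔᵀXᵀXΔ/n) ≥ √(ρ/(M·G_overlap)) · Σ_{g∈J} ‖v_g‖₂. In particular, the restricted eigenvalue condition of the overlapping group lasso holds with κ(s) = √(ρ/(M·G_overlap)) for every integer 1 ≤ s ≤ M. -/

import Mathlib

open Finset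

/-- The Euclidean (ℓ2) norm of a vector in ℝ^p. -/
noncomputable def l2norm {p : ℕ} (v : Fin p → ℝ) : ℝ := Real.sqrt (∑ j, v j ^ 2)

/-- A `G`-decomposition of `β`: a family `(v_g)_{g ∈ G}` of vectors with
`supp (v g) ⊆ g` for each `g ∈ G` and `∑_{g ∈ G} v g = β`. -/
def IsDecomp {p : ℕ} (G : Finset (Finset (Fin p))) (β : Fin p → ℝ)
    (v : Finset (Fin p) → Fin p → ℝ) : Prop :=
  (∀ g ∈ G, ∀ j, j ∉ g → v g j = 0) ∧ (∑ g ∈ G, v g) = β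

/-- The overlap norm `‖β‖_{2,1,G}`. -/
noncomputable def overlapNorm {p : ℕ} (G : Finset (Finset (Fin p))) (β : Fin p → ℝ) : ℝ :=
  sInf {r : ℝ | ∃ v, IsDecomp G β v ∧ r = ∑ g ∈ G, l2norm (v g)}

/-- A norm-minimizing `G`-decomposition of `β`. -/
def IsMinDecomp {p : ℕ} (G : Finset (Finset (Fin p))) (β : Fin p → ℝ)
    (v : Finset (Fin p) → Fin p → ℝ) : Prop :=
  IsDecomp G β v ∧ ∑ g ∈ G, l2norm (v g) = overlapNorm G β

/-- `G_overlap`: the maximal number of groups of `G` containing any single index. -/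
def Goverlap {p : ℕ} (G : Finset (Finset (Fin p))) : ℕ :=
  Finset.univ.sup fun j : Fin p => (G.filter fun g => j ∈ g).card

lemma l2norm_nonneg' {p : ℕ} (v : Fin p → ℝ) : 0 ≤ l2norm v := Real.sqrt_nonneg _

lemma overlapNorm_le_sqrt_card_mul {p : ℕ} (G : Finset (Finset (Fin p)))
    (hcover : ∀ i : Fin p, ∃ g ∈ G, i ∈ g) (Δ : Fin p → ℝ) :
    overlapNorm G Δ ≤ Real.sqrt G.card * l2norm Δ := by
  classical
  set c : Fin p → ℝ := fun j => ((G.filter fun g => j ∈ g).card : ℝ) with hc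
  have hc1 : ∀ j, 1 ≤ c j := by
    intro j
    obtain ⟨g, hg, hjg⟩ := hcover j
    have : 0 < (G.filter fun g => j ∈ g).card :=
      Finset.card_pos.2 ⟨g, Finset.mem_filter.2 ⟨hg, hjg⟩⟩
    have h1 : 1 ≤ (G.filter fun g => j ∈ g).card := this
    simp only [hc]; exact_mod_cast h1
  have hc0 : ∀ j, c j ≠ 0 := fun j => by linarith [hc1 j]
  set w : Finset (Fin p) → Fin p → ℝ := fun g j => if j ∈ g then Δ j / c j else 0 with hw
  have hdec : IsDecomp G Δ w := by
    constructor
    · intro g hg j hj; simp [hw, hj]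
    · funext j
      simp only [Finset.sum_apply, hw]
      rw [← Finset.sum_filter, Finset.sum_const, nsmul_eq_mul]
      rw [show ((G.filter fun g => j ∈ g).card : ℝ) = c j from rfl]
      rw [mul_div_assoc']; exact mul_div_cancel_left₀ _ (hc0 j)
  have hmem : (∑ g ∈ G, l2norm (w g)) ∈
      {r : ℝ | ∃ v, IsDecomp G Δ v ∧ r = ∑ g ∈ G, l2norm (v g)} := ⟨w, hdec, rfl⟩
  have hbdd : BddBelow {r : ℝ | ∃ v, IsDecomp G Δ v ∧ r = ∑ g ∈ G, l2norm (v g)} := by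
    refine ⟨0, fun r hr => ?_⟩
    obtain ⟨u, _, rfl⟩ := hr
    exact Finset.sum_nonneg fun g _ => l2norm_nonneg' _
  refine le_trans (csInf_le hbdd hmem) ?_
  -- bound ∑ l2norm (w g)
  have hag : ∀ g, 0 ≤ ∑ j, (w g j) ^ 2 := fun g => Finset.sum_nonneg fun j _ => sq_nonneg _
  have hsum : ∑ g ∈ G, ∑ j, (w g j) ^ 2 ≤ ∑ j, Δ j ^ 2 := by
    rw [Finset.sum_comm]
    refine Finset.sum_le_sum fun j _ => ?_
    have : ∑ g ∈ G, (w g j) ^ 2 = Δ j ^ 2 / c j := by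
      simp only [hw]
      rw [show ∑ g ∈ G, (if j ∈ g then Δ j / c j else 0) ^ 2
          = ∑ g ∈ G, (if j ∈ g then (Δ j / c j) ^ 2 else 0) by
        refine Finset.sum_congr rfl fun g _ => ?_
        split <;> simp]
      rw [← Finset.sum_filter, Finset.sum_const, nsmul_eq_mul]
      rw [show ((G.filter fun g => j ∈ g).card : ℝ) = c j from rfl]
      rw [div_pow, pow_two (c j), mul_div_assoc', mul_div_mul_left _ _ (hc0 j)]
    rw [this]
    exact div_le_self (sq_nonneg _) (hc1 j)
  have hS0 : 0 ≤ ∑ g ∈ G, l2norm (w g) := Finset.sum_nonneg fun g _ => l2norm_nonneg' _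
  have hS2 : (∑ g ∈ G, l2norm (w g)) ^ 2 ≤ (G.card : ℝ) * ∑ j, Δ j ^ 2 := by
    calc (∑ g ∈ G, l2norm (w g)) ^ 2
        ≤ (G.card : ℝ) * ∑ g ∈ G, (l2norm (w g)) ^ 2 := by
          exact_mod_cast sq_sum_le_card_mul_sum_sq (s := G) (f := fun g => l2norm (w g))
      _ = (G.card : ℝ) * ∑ g ∈ G, ∑ j, (w g j) ^ 2 := by
          congr 1
          exact Finset.sum_congr rfl fun g _ => Real.sq_sqrt (hag g)
      _ ≤ (G.card : ℝ) * ∑ j, Δ j ^ 2 :=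
          mul_le_mul_of_nonneg_left hsum (by positivity)
  calc (∑ g ∈ G, l2norm (w g))
      ≤ Real.sqrt ((G.card : ℝ) * ∑ j, Δ j ^ 2) := by
        rw [show (∑ g ∈ G, l2norm (w g)) = Real.sqrt ((∑ g ∈ G, l2norm (w g)) ^ 2) from
          (Real.sqrt_sq hS0).symm]
        exact Real.sqrt_le_sqrt hS2
    _ = Real.sqrt G.card * l2norm Δ := by
        rw [Real.sqrt_mul (by positivity)]; rfl

/-- if the smallest eigenvalue of `XᵀX/n` is at least `ρ > 0`
(i.e. `ΔᵀXᵀXΔ ≥ n·ρ·‖Δ‖₂²` for all `Δ`), then for every `Δ`, every norm-minimizing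
decomposition of `Δ` and every `J ⊆ G`,
`√(ΔᵀXᵀXΔ/n) ≥ √(ρ/(M·G_overlap)) · ∑_{g∈J}‖v_g‖₂`; in particular, the restricted
eigenvalue condition holds with `κ(s) = √(ρ/(M·G_overlap))` for every `1 ≤ s ≤ M`. -/
theorem restricted_eigenvalue_from_min_eigenvalue {p n : ℕ} (hp : 1 ≤ p) (hn : 1 ≤ n)
    (G : Finset (Finset (Fin p))) (hGne : G.Nonempty)
    (hcover : ∀ i : Fin p, ∃ g ∈ G, i ∈ g)
    (X : Matrix (Fin n) (Fin p) ℝ) (ρ : ℝ) (hρ : 0 < ρ)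
    (hX : ∀ Δ : Fin p → ℝ, (n : ℝ) * ρ * ∑ j, Δ j ^ 2 ≤ ∑ i, (X.mulVec Δ) i ^ 2) :
    (∀ (Δ : Fin p → ℝ) (v : Finset (Fin p) → Fin p → ℝ) (J : Finset (Finset (Fin p))),
      J ⊆ G → IsMinDecomp G Δ v →
      Real.sqrt (ρ / ((G.card : ℝ) * (Goverlap G : ℝ))) * ∑ g ∈ J, l2norm (v g) ≤
        Real.sqrt ((∑ i, (X.mulVec Δ) i ^ 2) / n)) ∧
    (∀ s : ℕ, 1 ≤ s → s ≤ G.card →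
      0 < Real.sqrt (ρ / ((G.card : ℝ) * (Goverlap G : ℝ))) ∧
      ∀ (J : Finset (Finset (Fin p))), J ⊆ G → J.card ≤ s →
        ∀ (Δ : Fin p → ℝ), Δ ≠ 0 →
          ∀ v : Finset (Fin p) → Fin p → ℝ, IsMinDecomp G Δ v →
            ∑ g ∈ G \ J, l2norm (v g) ≤ 3 * ∑ g ∈ J, l2norm (v g) →
            Real.sqrt (ρ / ((G.card : ℝ) * (Goverlap G : ℝ))) * Real.sqrt n *
                ∑ g ∈ J, l2norm (v g) ≤
              Real.sqrt (∑ i, (X.mulVec Δ) i ^ 2)) := by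
  
  classical
  have hMpos : (0:ℝ) < G.card := by exact_mod_cast Finset.card_pos.2 hGne
  have htpos : (0:ℝ) < (Goverlap G : ℝ) := by
    have j : Fin p := ⟨0, hp⟩
    obtain ⟨g, hg, hjg⟩ := hcover j
    have h1 : 0 < (G.filter fun g => j ∈ g).card :=
      Finset.card_pos.2 ⟨g, Finset.mem_filter.2 ⟨hg, hjg⟩⟩
    have h2 : (G.filter fun g => j ∈ g).card ≤ Goverlap G := by
      unfold Goverlap
      exact Finset.le_sup (f := fun j : Fin p => (G.filter fun g => j ∈ g).card) (Finset.mem_univ j)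
    exact_mod_cast lt_of_lt_of_le h1 h2
  have ht1 : (1:ℝ) ≤ (Goverlap G : ℝ) := by exact_mod_cast htpos
  have hnpos : (0:ℝ) < n := by exact_mod_cast hn
  have key : ∀ (Δ : Fin p → ℝ) (v : Finset (Fin p) → Fin p → ℝ)
      (J : Finset (Finset (Fin p))), J ⊆ G → IsMinDecomp G Δ v →
      Real.sqrt (ρ / ((G.card : ℝ) * (Goverlap G : ℝ))) * ∑ g ∈ J, l2norm (v g) ≤
        Real.sqrt ((∑ i, (X.mulVec Δ) i ^ 2) / n) := by
    intro Δ v J hJ hmin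
    have hSle : ∑ g ∈ J, l2norm (v g) ≤ Real.sqrt G.card * l2norm Δ := by
      calc ∑ g ∈ J, l2norm (v g) ≤ ∑ g ∈ G, l2norm (v g) :=
            Finset.sum_le_sum_of_subset_of_nonneg hJ fun g _ _ => l2norm_nonneg' _
        _ = overlapNorm G Δ := hmin.2
        _ ≤ Real.sqrt G.card * l2norm Δ := overlapNorm_le_sqrt_card_mul G hcover Δ
    have ha0 : 0 ≤ ρ / ((G.card : ℝ) * (Goverlap G : ℝ)) := by positivity
    calc Real.sqrt (ρ / ((G.card : ℝ) * (Goverlap G : ℝ))) * ∑ g ∈ J, l2norm (v g)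
        ≤ Real.sqrt (ρ / ((G.card : ℝ) * (Goverlap G : ℝ))) *
            (Real.sqrt G.card * l2norm Δ) :=
          mul_le_mul_of_nonneg_left hSle (Real.sqrt_nonneg _)
      _ = Real.sqrt (ρ / ((G.card : ℝ) * (Goverlap G : ℝ)) * G.card) * l2norm Δ := by
          rw [Real.sqrt_mul ha0]; ring
      _ = Real.sqrt (ρ / (Goverlap G : ℝ)) * l2norm Δ := by
          congr 2
          field_simp
      _ ≤ Real.sqrt ρ * l2norm Δ :=
          mul_le_mul_of_nonneg_right
            (Real.sqrt_le_sqrt (div_le_self hρ.le ht1)) (l2norm_nonneg' _)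
      _ = Real.sqrt (ρ * ∑ j, Δ j ^ 2) := by
          rw [Real.sqrt_mul hρ.le]; rfl
      _ ≤ Real.sqrt ((∑ i, (X.mulVec Δ) i ^ 2) / n) := by
          apply Real.sqrt_le_sqrt
          rw [le_div_iff₀ hnpos]
          calc ρ * (∑ j, Δ j ^ 2) * n = (n:ℝ) * ρ * ∑ j, Δ j ^ 2 := by ring
            _ ≤ ∑ i, (X.mulVec Δ) i ^ 2 := hX Δ
  refine ⟨key, fun s _ _ => ⟨Real.sqrt_pos.2 (div_pos hρ (mul_pos hMpos htpos)), ?_⟩⟩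
  intro J hJ _ Δ _ v hmin _
  have h1 := key Δ v J hJ hmin
  have hQ0 : 0 ≤ ∑ i, (X.mulVec Δ) i ^ 2 := Finset.sum_nonneg fun i _ => sq_nonneg _
  have h2 : Real.sqrt n * Real.sqrt ((∑ i, (X.mulVec Δ) i ^ 2) / n)
      = Real.sqrt (∑ i, (X.mulVec Δ) i ^ 2) := by
    rw [← Real.sqrt_mul hnpos.le, mul_div_cancel₀ _ (ne_of_gt hnpos)]
  calc Real.sqrt (ρ / ((G.card : ℝ) * (Goverlap G : ℝ))) * Real.sqrt n *
        ∑ g ∈ J, l2norm (v g)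
      = Real.sqrt n * (Real.sqrt (ρ / ((G.card : ℝ) * (Goverlap G : ℝ))) *
          ∑ g ∈ J, l2norm (v g)) := by ring
    _ ≤ Real.sqrt n * Real.sqrt ((∑ i, (X.mulVec Δ) i ^ 2) / n) :=
        mul_le_mul_of_nonneg_left h1 (Real.sqrt_nonneg _)
    _ = Real.sqrt (∑ i, (X.mulVec Δ) i ^ 2) := h2
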